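/- Let Σ̂ be an n×n real symmetric positive definite matrix and δ ∈ ℝ. Let (λ₀, X₀) ∈ C_F and let (δλ, δX) ≠ (0, 0) with δλ ∈ ℝ and δX n×n real symmetric. Suppose there exists ε > 0 such that for all α with |α| < ε one has λ₀ + α·δλ > 0, Σ̂⁻¹ + (λ₀ + α·δλ)⁻¹(X₀ + α·δX) ≻ 0, and F(λ₀ + α·δλ, X₀ + α·δX) = F(λ₀, X₀). Then F(λ₀, X₀) = 0. -/

import Mathlib

/-- `dd M`: the diagonal matrix with the same diagonal as `M`. -/
def dd {n : ℕ} (M : Matrix (Fin n) (Fin n) ℝ) : Matrix (Fin n) (Fin n) ℝ :=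
  Matrix.diagonal fun i => M i i

/-- `F(λ,X) := −λ(log det(Ŝ⁻¹ + λ⁻¹X) + log det Ŝ − δ)`. -/
noncomputable def Fobj {n : ℕ} (S : Matrix (Fin n) (Fin n) ℝ) (δ : ℝ)
    (l : ℝ) (X : Matrix (Fin n) (Fin n) ℝ) : ℝ :=
  -(l * (Real.log ((S⁻¹ + l⁻¹ • X).det) + Real.log S.det - δ))

/-- The constraint set `C_F`: `λ > 0`, `X` symmetric, `X ⪯ I`, `dd(X) ⪯ 0`,
`Ŝ⁻¹ + λ⁻¹X ≻ 0`. -/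
def CF {n : ℕ} (S : Matrix (Fin n) (Fin n) ℝ)
    (l : ℝ) (X : Matrix (Fin n) (Fin n) ℝ) : Prop :=
  0 < l ∧ X.IsSymm ∧ (1 - X).PosSemidef ∧ (-(dd X)).PosSemidef ∧
    (S⁻¹ + l⁻¹ • X).PosDef


open Polynomial Matrix

/-- determinant polynomial of a pencil `M + α B` -/
noncomputable def detPoly {n : ℕ} (M B : Matrix (Fin n) (Fin n) ℝ) : ℝ[X] :=
  (Matrix.of fun i j => Polynomial.C (M i j) + Polynomial.X * Polynomial.C (B i j)).det

lemma detPoly_eval {n : ℕ} (M B : Matrix (Fin n) (Fin n) ℝ) (α : ℝ) :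
    (detPoly M B).eval α = (M + α • B).det := by
  unfold detPoly
  rw [Polynomial.eval, ← Polynomial.coe_eval₂RingHom, RingHom.map_det]
  congr 1
  ext i j
  simp only [RingHom.mapMatrix_apply, Matrix.map_apply, Matrix.of_apply, coe_eval₂RingHom,
    eval₂_add, eval₂_C, eval₂_mul, eval₂_X, Matrix.add_apply, Matrix.smul_apply, smul_eq_mul,
    RingHom.id_apply]

lemma poly_zero_of_Ioo {p : ℝ[X]} {a b : ℝ} (hab : a < b)
    (h : ∀ x ∈ Set.Ioo a b, p.eval x = 0) : p = 0 := by
  apply Polynomial.eq_zero_of_infinite_isRoot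
  exact (Set.Ioo_infinite hab).mono h

lemma posDef_smul' {n : ℕ} {M : Matrix (Fin n) (Fin n) ℝ} (hM : M.PosDef) {c : ℝ} (hc : 0 < c) :
    (c • M).PosDef := by
  refine Matrix.PosDef.of_dotProduct_mulVec_pos ?_ (fun x hx => ?_)
  · have h1 := hM.1
    simpa [Matrix.IsHermitian] using congrArg (c • ·) h1
  · have := hM.dotProduct_mulVec_pos hx
    rw [Matrix.smul_mulVec, dotProduct_smul]
    exact mul_pos hc this

open Polynomial Matrix

lemma poly_ode_zero {n : ℕ} {Q : ℝ[X]} {K : ℝ} (hK : K ≠ 0)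
    (h : Polynomial.X ^ 2 * Q.derivative = (Polynomial.C K + Polynomial.C (n : ℝ) * Polynomial.X) * Q) :
    Q = 0 := by
  have hco : ∀ m : ℕ, (Polynomial.X ^ 2 * Q.derivative).coeff m
      = K * Q.coeff m + (n : ℝ) * (Polynomial.X * Q).coeff m := by
    intro m
    rw [h]
    simp [add_mul, mul_assoc, Polynomial.coeff_C_mul]
  have hq : ∀ m : ℕ, Q.coeff m = 0 := by
    intro m
    induction m with
    | zero =>
      have h0 := hco 0
      rw [mul_comm (Polynomial.X ^ 2)] at h0
      simp [Polynomial.coeff_mul_X_pow', Polynomial.mul_coeff_zero] at h0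
      rcases h0 with h0 | h0
      · exact absurd h0 hK
      · exact h0
    | succ m ih =>
      have h0 := hco (m + 1)
      rw [mul_comm (Polynomial.X ^ 2)] at h0
      rw [Polynomial.coeff_mul_X_pow', Polynomial.coeff_X_mul, ih] at h0
      have hK0 : K * Q.coeff (m + 1) = 0 := by
        rcases Nat.lt_or_ge (m + 1) 2 with hm | hm
        · rw [if_neg (by omega)] at h0
          linarith
        · rw [if_pos hm, show m + 1 - 2 = m - 1 from by omega,
            Polynomial.coeff_derivative, show m - 1 + 1 = m from by omega, ih] at h0
          linarith
      exact (mul_eq_zero.mp hK0).resolve_left hK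
  exact Polynomial.ext fun m => by simp [hq m]

open Polynomial Matrix

lemma det_one_add_smul_eq_one {n : ℕ} {B : Matrix (Fin n) (Fin n) ℝ}
    (hB : B.IsHermitian) (h : ∀ α : ℝ, (1 + α • B).det = 1) : B = 0 := by
  set U : Matrix (Fin n) (Fin n) ℝ :=
    (Matrix.IsHermitian.eigenvectorUnitary hB : Matrix (Fin n) (Fin n) ℝ) with hUdef
  have hU : U * star U = 1 :=
    Matrix.mem_unitaryGroup_iff.mp (Matrix.IsHermitian.eigenvectorUnitary hB).2
  have hdetU : U.det * (star U).det = 1 := by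
    rw [← Matrix.det_mul, hU, Matrix.det_one]
  have hspec : B = U * Matrix.diagonal hB.eigenvalues * star U := by
    have := hB.spectral_theorem
    simpa [RCLike.ofReal_real_eq_id] using this
  have hconj : ∀ c : ℝ, (1 : Matrix (Fin n) (Fin n) ℝ) + c • B
      = U * Matrix.diagonal (fun j => 1 + c * hB.eigenvalues j) * star U := by
    intro c
    have hdiag : (1 : Matrix (Fin n) (Fin n) ℝ) + c • Matrix.diagonal hB.eigenvalues
        = Matrix.diagonal (fun j => 1 + c * hB.eigenvalues j) := by
      rw [← Matrix.diagonal_one, ← Matrix.diagonal_smul, ← Matrix.diagonal_add]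
      rfl
    calc (1 : Matrix (Fin n) (Fin n) ℝ) + c • B
        = U * (1 + c • Matrix.diagonal hB.eigenvalues) * star U := by
          rw [Matrix.mul_add, Matrix.add_mul, mul_one, hU, Matrix.mul_smul, Matrix.smul_mul,
            ← hspec]
      _ = _ := by rw [hdiag]
  have hprod : ∀ c : ℝ, (∏ j, (1 + c * hB.eigenvalues j)) = 1 := by
    intro c
    have := h c
    rw [hconj c] at this
    rw [Matrix.det_mul, Matrix.det_mul, mul_comm, ← mul_assoc, mul_comm ((star U).det),
      hdetU, one_mul, Matrix.det_diagonal] at this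
    exact this
  have hmu : ∀ i, hB.eigenvalues i = 0 := by
    intro i
    by_contra hi
    have h1 := hprod (-(hB.eigenvalues i)⁻¹)
    have hz : (1 : ℝ) + (-(hB.eigenvalues i)⁻¹) * hB.eigenvalues i = 0 := by
      field_simp
      ring
    rw [Finset.prod_eq_zero (Finset.mem_univ i) hz] at h1
    exact zero_ne_one h1
  rw [hspec]
  have : Matrix.diagonal hB.eigenvalues = 0 := by
    ext i j
    by_cases hij : i = j <;> simp [Matrix.diagonal, hij, hmu]
  rw [this, Matrix.mul_zero, Matrix.zero_mul]

open scoped MatrixOrder in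
lemma symm_det_pencil_const {n : ℕ} {M B : Matrix (Fin n) (Fin n) ℝ}
    (hM : M.PosDef) (hB : B.IsHermitian)
    (h : ∀ α : ℝ, (M + α • B).det = M.det) : B = 0 := by
  set R := CFC.sqrt M with hRdef
  have hRpsd : R.PosSemidef := (CFC.sqrt_nonneg M).posSemidef
  have hRR : R * R = M := CFC.sqrt_mul_sqrt_self M hM.posSemidef.nonneg
  have hdetR : R.det ≠ 0 := by
    intro h0
    have : M.det = 0 := by rw [← hRR, Matrix.det_mul, h0, zero_mul]
    exact hM.det_pos.ne' this
  have hRinv : R * R⁻¹ = 1 := Matrix.mul_nonsing_inv R hdetR.isUnit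
  have hRinv' : R⁻¹ * R = 1 := Matrix.nonsing_inv_mul R hdetR.isUnit
  have hRherm : Rᴴ = R := hRpsd.1
  have hRinvherm : (R⁻¹)ᴴ = R⁻¹ := by rw [Matrix.conjTranspose_nonsing_inv, hRherm]
  set Bt := R⁻¹ * B * R⁻¹ with hBtdef
  have hBtherm : Bt.IsHermitian := by
    unfold Bt
    rw [Matrix.IsHermitian, Matrix.conjTranspose_mul, Matrix.conjTranspose_mul, hRinvherm, hB]
    rw [Matrix.mul_assoc]
  have hMconj : R⁻¹ * M * R⁻¹ = 1 := by
    rw [← hRR, ← Matrix.mul_assoc, Matrix.mul_assoc (R⁻¹ * R), hRinv', hRinv, one_mul]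
  have hkey : ∀ α : ℝ, ((1 : Matrix (Fin n) (Fin n) ℝ) + α • Bt).det = 1 := by
    intro α
    have hc : (1 : Matrix (Fin n) (Fin n) ℝ) + α • Bt = R⁻¹ * (M + α • B) * R⁻¹ := by
      rw [Matrix.mul_add, Matrix.add_mul, hMconj]
      congr 1
      rw [Matrix.mul_smul, Matrix.smul_mul]
    rw [hc, Matrix.det_mul, Matrix.det_mul, h α, ← Matrix.det_mul, ← Matrix.det_mul, hMconj,
      Matrix.det_one]
  have hBt0 : Bt = 0 := det_one_add_smul_eq_one hBtherm hkey
  have : R * Bt * R = B := by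
    unfold Bt
    rw [← Matrix.mul_assoc, ← Matrix.mul_assoc, hRinv, one_mul, Matrix.mul_assoc, hRinv',
      Matrix.mul_one]
  rw [← this, hBt0, Matrix.mul_zero, Matrix.zero_mul]

/-- If `(λ₀, X₀) ∈ C_F` and `F` is constant along some nonzero feasible
direction `(δλ, δX)` through `(λ₀, X₀)`, then `F(λ₀, X₀) = 0`. -/
theorem stmt16 {n : ℕ} (S : Matrix (Fin n) (Fin n) ℝ) (hS : S.PosDef) (δ : ℝ)
    (l₀ : ℝ) (X₀ : Matrix (Fin n) (Fin n) ℝ) (hmem : CF S l₀ X₀)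
    (dl : ℝ) (dX : Matrix (Fin n) (Fin n) ℝ) (hdX : dX.IsSymm)
    (hne : ¬(dl = 0 ∧ dX = 0))
    (hconst : ∃ ε > (0 : ℝ), ∀ α : ℝ, |α| < ε →
      0 < l₀ + α * dl ∧
      (S⁻¹ + (l₀ + α * dl)⁻¹ • (X₀ + α • dX)).PosDef ∧
      Fobj S δ (l₀ + α * dl) (X₀ + α • dX) = Fobj S δ l₀ X₀) :
    Fobj S δ l₀ X₀ = 0 := by
  obtain ⟨ε, hε, hc⟩ := hconst
  set K := Fobj S δ l₀ X₀ with hKdef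
  set cc : ℝ := Real.log S.det - δ with hcc
  set P : ℝ[X] := detPoly (l₀ • S⁻¹ + X₀) (dl • S⁻¹ + dX) with hPdef
  have hPev : ∀ α : ℝ, P.eval α = ((l₀ + α * dl) • S⁻¹ + (X₀ + α • dX)).det := by
    intro α
    rw [hPdef, detPoly_eval]
    congr 1
    module
  have hMpos : ∀ α : ℝ, |α| < ε → 0 < P.eval α ∧
      Real.log ((S⁻¹ + (l₀ + α * dl)⁻¹ • (X₀ + α • dX)).det)
        = Real.log (P.eval α) - n * Real.log (l₀ + α * dl) := by
    intro α hα
    obtain ⟨hla, hApos, -⟩ := hc α hα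
    have hsm : (l₀ + α * dl) • (S⁻¹ + (l₀ + α * dl)⁻¹ • (X₀ + α • dX))
        = (l₀ + α * dl) • S⁻¹ + (X₀ + α • dX) := by
      rw [smul_add, smul_smul, mul_inv_cancel₀ hla.ne', one_smul]
    have hPα : P.eval α
        = (l₀ + α * dl) ^ n * (S⁻¹ + (l₀ + α * dl)⁻¹ • (X₀ + α • dX)).det := by
      rw [hPev α, ← hsm, Matrix.det_smul, Fintype.card_fin]
    constructor
    · rw [hPα]; exact mul_pos (pow_pos hla _) hApos.det_pos
    · rw [hPα, Real.log_mul (pow_ne_zero _ hla.ne') hApos.det_pos.ne', Real.log_pow]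
      ring
  have hgK : ∀ α : ℝ, |α| < ε →
      -((l₀ + α * dl) * (Real.log (P.eval α) - n * Real.log (l₀ + α * dl) + cc)) = K := by
    intro α hα
    obtain ⟨hla, hApos, hF⟩ := hc α hα
    have h2 := (hMpos α hα).2
    rw [← hF]
    show -((l₀ + α * dl) * _) = _
    rw [Fobj, h2, hcc]
    ring
  have hODE : ∀ a ∈ Set.Ioo (-ε) ε,
      (l₀ + a * dl) ^ 2 * P.derivative.eval a
        = dl * (K + n * (l₀ + a * dl)) * P.eval a := by
    intro a ha
    have haε : |a| < ε := abs_lt.mpr ⟨ha.1, ha.2⟩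
    obtain ⟨hla, -, -⟩ := hc a haε
    have hPa : 0 < P.eval a := (hMpos a haε).1
    have h1 : HasDerivAt (fun x : ℝ => l₀ + x * dl) dl a := by
      simpa using ((hasDerivAt_id a).mul_const dl).const_add l₀
    have h3 : HasDerivAt (fun x : ℝ => Real.log (P.eval x))
        (P.derivative.eval a / P.eval a) a := (P.hasDerivAt a).log hPa.ne'
    have h4 : HasDerivAt (fun x : ℝ => Real.log (l₀ + x * dl))
        (dl / (l₀ + a * dl)) a := h1.log hla.ne'
    have hg : HasDerivAt
        (fun x : ℝ => -((l₀ + x * dl) * (Real.log (P.eval x) - n * Real.log (l₀ + x * dl) + cc)))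
        (-(dl * (Real.log (P.eval a) - n * Real.log (l₀ + a * dl) + cc)
          + (l₀ + a * dl) * (P.derivative.eval a / P.eval a - n * (dl / (l₀ + a * dl))))) a := by
      have := (h1.mul (((h3.sub (h4.const_mul (n : ℝ))).add_const cc))).neg
      convert this using 2
      all_goals rfl
    have hg0 : HasDerivAt
        (fun x : ℝ => -((l₀ + x * dl) * (Real.log (P.eval x) - n * Real.log (l₀ + x * dl) + cc)))
        0 a := by
      have hev : (fun x : ℝ => -((l₀ + x * dl) * (Real.log (P.eval x)
          - n * Real.log (l₀ + x * dl) + cc))) =ᶠ[nhds a] fun _ => K := by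
        filter_upwards [Ioo_mem_nhds ha.1 ha.2] with x hx
        exact hgK x (abs_lt.mpr ⟨hx.1, hx.2⟩)
      exact (hasDerivAt_const a K).congr_of_eventuallyEq hev
    have heq := hg.unique hg0
    have hIa := hgK a haε
    have hPane : P.eval a ≠ 0 := hPa.ne'
    have hlane : l₀ + a * dl ≠ 0 := hla.ne'
    set I := Real.log (P.eval a) - n * Real.log (l₀ + a * dl) + cc with hI
    have hlI : (l₀ + a * dl) * I = -K := by linarith
    have heq' : dl * I + (l₀ + a * dl) * (P.derivative.eval a / P.eval a
        - n * (dl / (l₀ + a * dl))) = 0 := by linarith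
    have hdiv : (l₀ + a * dl) * (P.derivative.eval a / P.eval a - n * (dl / (l₀ + a * dl)))
        = ((l₀ + a * dl) * P.derivative.eval a - n * dl * P.eval a) / P.eval a := by
      field_simp
    rw [hdiv] at heq'
    have heq'' : dl * I * P.eval a + ((l₀ + a * dl) * P.derivative.eval a
        - n * dl * P.eval a) = 0 := by
      have := congrArg (fun t => t * P.eval a) heq'
      simpa [add_mul, div_mul_cancel₀ _ hPane] using this
    have := congrArg (fun t => (l₀ + a * dl) * t) heq''
    simp only [mul_add, mul_zero] at this
    linear_combination this - dl * P.eval a * hlI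
  set L : ℝ[X] := Polynomial.C l₀ + Polynomial.C dl * Polynomial.X with hL
  have hpoly : L ^ 2 * P.derivative
      = Polynomial.C dl * (Polynomial.C K + Polynomial.C (n : ℝ) * L) * P := by
    have hz : L ^ 2 * P.derivative
        - Polynomial.C dl * (Polynomial.C K + Polynomial.C (n : ℝ) * L) * P = 0 := by
      apply poly_zero_of_Ioo (show -ε < ε by linarith)
      intro x hx
      have h := hODE x hx
      simp only [hL, Polynomial.eval_sub, Polynomial.eval_mul, Polynomial.eval_pow,
        Polynomial.eval_add, Polynomial.eval_C, Polynomial.eval_X]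
      nlinarith [h]
    have := sub_eq_zero.mp hz
    exact this
  by_cases hdl : dl = 0
  · -- direction is purely in X; contradiction
    exfalso
    have hdX0 : dX ≠ 0 := fun h => hne ⟨hdl, h⟩
    have hP' : P.derivative = 0 := by
      rw [hdl] at hpoly
      simp only [map_zero, zero_mul] at hpoly
      have hC : (Polynomial.C l₀ : ℝ[X]) ≠ 0 := by
        simpa using hmem.1.ne'
      have hL0 : L ^ 2 ≠ 0 := by
        rw [hL, hdl]
        simpa using pow_ne_zero 2 hC
      exact (mul_eq_zero.mp hpoly).resolve_left hL0
    have hPc : P = Polynomial.C (P.coeff 0) := Polynomial.eq_C_of_derivative_eq_zero hP'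
    have hB : dl • S⁻¹ + dX = dX := by rw [hdl]; simp
    have hdetconst : ∀ α : ℝ, ((l₀ • S⁻¹ + X₀) + α • dX).det = (l₀ • S⁻¹ + X₀).det := by
      intro α
      have e1 : P.eval α = P.eval 0 := by rw [hPc]; simp
      have e2 := detPoly_eval (l₀ • S⁻¹ + X₀) (dl • S⁻¹ + dX) α
      have e3 := detPoly_eval (l₀ • S⁻¹ + X₀) (dl • S⁻¹ + dX) 0
      rw [← hPdef] at e2 e3
      rw [hB] at e2 e3
      rw [← e2, e1, e3]
      simp
    have hM0 : (l₀ • S⁻¹ + X₀).PosDef := by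
      have := posDef_smul' hmem.2.2.2.2 hmem.1
      have hsm : l₀ • (S⁻¹ + l₀⁻¹ • X₀) = l₀ • S⁻¹ + X₀ := by
        rw [smul_add, smul_smul, mul_inv_cancel₀ hmem.1.ne', one_smul]
      rwa [hsm] at this
    have hdXh : dX.IsHermitian := by
      rw [Matrix.IsHermitian]
      rw [Matrix.conjTranspose]
      have : dXᵀ = dX := hdX
      simpa [Matrix.conjTranspose, Matrix.map, starRingEnd_apply, star_trivial, Matrix.transpose] using this
    exact hdX0 (symm_det_pencil_const hM0 hdXh hdetconst)
  · -- dl ≠ 0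
    by_contra hK0
    set u : ℝ[X] := Polynomial.C (-(l₀ / dl)) + Polynomial.C dl⁻¹ * Polynomial.X with hu
    have hLu : L.comp u = Polynomial.X := by
      rw [hL, hu]
      simp only [Polynomial.add_comp, Polynomial.C_comp, Polynomial.mul_comp, Polynomial.X_comp]
      rw [mul_add, ← Polynomial.C_mul, ← mul_assoc, ← Polynomial.C_mul, ← add_assoc,
        ← Polynomial.C_add]
      rw [show l₀ + dl * -(l₀ / dl) = 0 by field_simp; ring, show dl * dl⁻¹ = 1 by field_simp]
      simp
    have huder : Polynomial.derivative u = Polynomial.C dl⁻¹ := by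
      rw [hu]; simp
    have hQder : (P.comp u).derivative = Polynomial.C dl⁻¹ * P.derivative.comp u := by
      rw [Polynomial.derivative_comp, huder]
    have hcomp := congrArg (fun p : ℝ[X] => p.comp u) hpoly
    simp only [Polynomial.mul_comp, Polynomial.pow_comp, Polynomial.add_comp,
      Polynomial.C_comp, hLu] at hcomp
    have hQode : Polynomial.X ^ 2 * (P.comp u).derivative
        = (Polynomial.C K + Polynomial.C (n : ℝ) * Polynomial.X) * (P.comp u) := by
      rw [hQder]
      calc Polynomial.X ^ 2 * (Polynomial.C dl⁻¹ * P.derivative.comp u)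
          = Polynomial.C dl⁻¹ * (Polynomial.X ^ 2 * P.derivative.comp u) := by ring
        _ = Polynomial.C dl⁻¹ * (Polynomial.C dl
            * ((Polynomial.C K + Polynomial.C (n : ℝ) * Polynomial.X) * P.comp u)) := by
            rw [hcomp]; ring
        _ = (Polynomial.C K + Polynomial.C (n : ℝ) * Polynomial.X) * (P.comp u) := by
            rw [← mul_assoc, ← Polynomial.C_mul, inv_mul_cancel₀ hdl, Polynomial.C_1, one_mul]
    have hQ0 : P.comp u = 0 := poly_ode_zero hK0 hQode
    have hev : (P.comp u).eval l₀ = P.eval 0 := by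
      rw [Polynomial.eval_comp]
      congr 1
      rw [hu]
      simp only [Polynomial.eval_add, Polynomial.eval_C, Polynomial.eval_mul, Polynomial.eval_X]
      field_simp
      ring
    have hP0 : 0 < P.eval 0 := (hMpos 0 (by simpa using hε)).1
    rw [hQ0] at hev
    simp at hev
    linarith
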